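/- arXiv:2403.08921 — 2 statements merged into one kernel-verified Lean document; each statement's English description precedes it below -/
import Mathlib

section
/- For any ε > 0 there exists d₀ = d₀(ε) ≥ 1 such that for all d ≥ d₀ and all β with 0 < β ≤ (1−ε)·β_c(d) the following holds: for G = G(n,d/n) equipped with the Edwards–Anderson model at inverse temperature β, and any fixed vertex u of G, the aggregate influence satisfies Pr[Λ(u) ≥ E[Λ(u)] + ε/2] ≤ exp(−(ε⁴/(8π))·d), where the probability and expectation are over both the random degree of u and the Gaussian couplings on its incident edges. -/
open MeasureTheory ProbabilityTheory Real
open scoped Classical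

noncomputable section

namespace EA

/-- Spin configurations. -/
abbrev Config (V : Type*) := V → Bool

/-- The critical inverse temperature `β_c(k) = √(2π)/k`. -/
def betaC (k : ℝ) : ℝ := Real.sqrt (2 * Real.pi) / k

/-- The influence of an edge carrying coupling `x`, at inverse temperature `β`. -/
def influence (β x : ℝ) : ℝ := |1 - Real.exp (β * x)| / (1 + Real.exp (β * x))

variable {V : Type*} [Fintype V] [DecidableEq V]

/-- The aggregate influence `Λ(u) = ∑_{z ∼ u} Γ_{{u,z}}`. -/
def aggInfluence (G : SimpleGraph V) (β : ℝ) (J : V → V → ℝ) (u : V) : ℝ :=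
  ∑ z ∈ G.neighborFinset u, influence β (J u z)

/-- The `(d,ε)` vertex weight `M(u)`. -/
def vertexWeight (d ε : ℝ) (G : SimpleGraph V) (β : ℝ) (J : V → V → ℝ) (u : V) : ℝ :=
  if aggInfluence G β J u ≤ 1 - ε / 2 then 1 - ε / 4 else d * aggInfluence G β J u

/-- The `(d,ε)` weight of a path: product of the weights of its vertices. -/
def walkWeight (d ε : ℝ) (G : SimpleGraph V) (β : ℝ) (J : V → V → ℝ) {u w : V}
    (p : G.Walk u w) : ℝ :=
  (p.support.map (vertexWeight d ε G β J)).prod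

/-- `u` is a `(d,ε)`-block vertex of range `k`: every path of length at most `k`
emanating from `u` has weight `< 1`. -/
def IsBlockVertexOfRange (d ε : ℝ) (G : SimpleGraph V) (β : ℝ) (J : V → V → ℝ)
    (k : ℝ) (u : V) : Prop :=
  ∀ (w : V) (p : G.Walk u w), p.IsPath → (p.length : ℝ) ≤ k → walkWeight d ε G β J p < 1

/-- `u` is a `(d,ε)`-block vertex: every path of length at most `log n`
emanating from `u` has weight `< 1`. -/
def IsBlockVertex (n : ℕ) (d ε : ℝ) (G : SimpleGraph V) (β : ℝ) (J : V → V → ℝ) (u : V) : Prop :=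
  IsBlockVertexOfRange d ε G β J (Real.log n) u

/-- Unnormalised Gibbs weight `exp(β ∑_{x∼y} 1{σx=σy} J_{xy})`
(each edge counted once, hence the factor `1/2` for the double sum). -/
def gibbsWeight (G : SimpleGraph V) (β : ℝ) (J : V → V → ℝ) (σ : Config V) : ℝ :=
  Real.exp (β / 2 * ∑ x : V, ∑ y : V, if G.Adj x y ∧ σ x = σ y then J x y else 0)

/-- The Gibbs distribution `μ_{G,J,β}`. -/
def gibbs (G : SimpleGraph V) (β : ℝ) (J : V → V → ℝ) (σ : Config V) : ℝ :=
  gibbsWeight G β J σ / ∑ τ : Config V, gibbsWeight G β J τ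

/-- Transition matrix of the single-site Glauber dynamics for `μ_{G,J,β}`. -/
def glauberP (G : SimpleGraph V) (β : ℝ) (J : V → V → ℝ) :
    Matrix (Config V) (Config V) ℝ := fun σ τ =>
  (Fintype.card V : ℝ)⁻¹ * ∑ v : V,
    if ∀ w, w ≠ v → τ w = σ w then
      gibbsWeight G β J τ /
        (gibbsWeight G β J (Function.update σ v true) +
          gibbsWeight G β J (Function.update σ v false))
    else 0

/-- Total variation distance between two distributions on a finite set. -/
def tvDist {α : Type*} [Fintype α] (p q : α → ℝ) : ℝ := (∑ x, |p x - q x|) / 2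

/-- Mixing time: `max_σ min { t > 0 : ‖P^t(σ,·) − π‖_TV ≤ 1/e }`. -/
def mixingTime {α : Type*} [Fintype α] [DecidableEq α] (P : Matrix α α ℝ) (stat : α → ℝ) : ℕ :=
  Finset.univ.sup fun σ : α =>
    sInf {t : ℕ | 0 < t ∧ tvDist (fun τ => (P ^ t) σ τ) stat ≤ (Real.exp 1)⁻¹}

/-- The second largest absolute value of an eigenvalue of `P`. -/
def secondEigenAbs {α : Type*} [Fintype α] [DecidableEq α] (P : Matrix α α ℝ) : ℝ :=
  sSup {ρ : ℝ | ∃ x : ℝ, x ≠ 1 ∧ Module.End.HasEigenvalue (Matrix.toLin' P) x ∧ ρ = |x|}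

/-- The relaxation time `1/(1 − λ*)`. -/
def relaxTime {α : Type*} [Fintype α] [DecidableEq α] (P : Matrix α α ℝ) : ℝ :=
  1 / (1 - secondEigenAbs P)

/-! ### The random graph `G(n, d/n)` together with i.i.d. standard Gaussian couplings -/

/-- The graph determined by edge indicators `η`. -/
def graphOf {n : ℕ} (η : Sym2 (Fin n) → Bool) : SimpleGraph (Fin n) where
  Adj u v := u ≠ v ∧ η s(u, v) = true
  symm := ⟨fun u v h => ⟨h.1.symm, by rw [Sym2.eq_swap]; exact h.2⟩⟩
  loopless := ⟨fun u h => h.1 rfl⟩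

/-- Bernoulli measure on `Bool` with success probability `p`. -/
def bernoulliBool (p : ℝ) : Measure Bool :=
  (PMF.bernoulli (min (Real.toNNReal p) 1) (min_le_right _ _)).toMeasure

/-- The joint law of the Erdős–Rényi graph `G(n,d/n)` and of the i.i.d. standard
Gaussian couplings of the Edwards–Anderson model on it. -/
def eaMeasure (n : ℕ) (d : ℝ) : Measure ((Sym2 (Fin n) → Bool) × (Sym2 (Fin n) → ℝ)) :=
  (Measure.pi fun _ => bernoulliBool (d / n)).prod (Measure.pi fun _ => gaussianReal 0 1)

/-- Couplings indexed by unordered pairs, as a symmetric two-argument function. -/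
def coupOf {n : ℕ} (Jc : Sym2 (Fin n) → ℝ) : Fin n → Fin n → ℝ := fun u v => Jc s(u, v)

/-! ### Block partitions -/

/-- The outer boundary `∂_out B`. -/
def outBoundary (G : SimpleGraph V) (B : Finset V) : Finset V :=
  Finset.univ.filter fun w => w ∉ B ∧ ∃ v ∈ B, G.Adj w v

/-- The number of edges of `G` spanned by the vertex set `B`. -/
def spanEdgeCount (G : SimpleGraph V) (B : Finset V) : ℕ :=
  (Finset.univ.filter fun e : Sym2 V => e ∈ G.edgeSet ∧ ∀ v ∈ e, v ∈ B).card

/-- A `(d,ε)`-block partition. -/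
structure IsBlockPartition (n : ℕ) (d ε : ℝ) (G : SimpleGraph V) (β : ℝ)
    (J : V → V → ℝ) (Bs : Finset (Finset V)) : Prop where
  nonempty : ∀ B ∈ Bs, B.Nonempty
  disj : ∀ B ∈ Bs, ∀ B' ∈ Bs, B ≠ B' → Disjoint B B'
  covers : ∀ v : V, ∃ B ∈ Bs, v ∈ B
  connected : ∀ B ∈ Bs, (G.induce (B : Set V)).Connected
  unicyclic : ∀ B ∈ Bs, spanEdgeCount G B ≤ B.card
  boundary_block : ∀ B ∈ Bs, 2 ≤ B.card → ∀ w ∈ outBoundary G B, IsBlockVertex n d ε G β J w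
  boundary_unique : ∀ B ∈ Bs, 2 ≤ B.card → ∀ w ∈ outBoundary G B,
    (G.neighborFinset w ∩ B).card = 1
  cycle_short : ∀ B ∈ Bs, 2 ≤ B.card → ∀ (v : V) (c : G.Walk v v), c.IsCycle →
    (∀ x ∈ c.support, x ∈ B) → (c.length : ℝ) ≤ 4 * Real.log n / (Real.log d) ^ 4
  cycle_far : ∀ B ∈ Bs, 2 ≤ B.card → ∀ (v : V) (c : G.Walk v v), c.IsCycle →
    (∀ x ∈ c.support, x ∈ B) → ∀ x ∈ c.support, ∀ w ∈ outBoundary G B,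
      (Real.log d) ^ 5 ≤ (G.dist x w : ℝ)
  singleton_block : ∀ B ∈ Bs, B.card = 1 → ∀ v ∈ B, IsBlockVertex n d ε G β J v

/-- The path weight `Υ(P) = β ∑_{e incident to P} |J_e| + ∑_{v ∈ P} log deg(v)`. -/
def upsilon (G : SimpleGraph V) (β : ℝ) (J : V → V → ℝ) {u w : V} (p : G.Walk u w) : ℝ :=
  β * (2⁻¹ * ∑ x : V, ∑ y : V,
      if G.Adj x y ∧ (x ∈ p.support ∨ y ∈ p.support) then |J x y| else 0) +
    (p.support.map fun v => Real.log (G.degree v)).sum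

/-- Membership of the triplet `(G,J,β)` in the good set `𝒢(d,ε)`. -/
def InGoodSet (n : ℕ) (d ε β : ℝ) (G : SimpleGraph V) (J : V → V → ℝ) : Prop :=
  (0 < β ∧ β ≤ (1 - ε) * betaC d) ∧
  (∃ Bs : Finset (Finset V), IsBlockPartition n d ε G β J Bs) ∧
  (∀ (u w : V) (p : G.Walk u w), p.IsPath → (p.length : ℝ) ≤ Real.log n / (Real.log d) ^ 4 →
    upsilon G β J p ≤ Real.log n / (Real.log d) ^ 2) ∧
  (∀ u v : V, G.Adj u v →
    (n : ℝ) ^ (-(7 / 3 : ℝ)) ≤ |J u v| ∧ |J u v| ≤ 10 * Real.sqrt (Real.log n))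

/-! ### Block dynamics -/

/-- Transition matrix of the block dynamics for `μ_{G,J,β}` with blocks `Bs`. -/
def blockP (G : SimpleGraph V) (β : ℝ) (J : V → V → ℝ) (Bs : Finset (Finset V)) :
    Matrix (Config V) (Config V) ℝ := fun σ τ =>
  (Bs.card : ℝ)⁻¹ * ∑ B ∈ Bs,
    if ∀ w ∉ B, τ w = σ w then
      gibbsWeight G β J τ /
        ∑ τ' ∈ Finset.univ.filter (fun τ' : Config V => ∀ w ∉ B, τ' w = σ w),
          gibbsWeight G β J τ'
    else 0

/-- The update kernel that resamples the block `B` from the conditional Gibbs marginal. -/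
def blockKernel (G : SimpleGraph V) (β : ℝ) (J : V → V → ℝ) (B : Finset V)
    (σ τ : Config V) : ℝ :=
  if ∀ w ∉ B, τ w = σ w then
    gibbsWeight G β J τ /
      ∑ τ' ∈ Finset.univ.filter (fun τ' : Config V => ∀ w ∉ B, τ' w = σ w),
        gibbsWeight G β J τ'
  else 0

/-- `Λ_out(z)`: the aggregate influence of `z` on its neighbours outside its own block. -/
def aggInfluenceOut (G : SimpleGraph V) (β : ℝ) (J : V → V → ℝ) (Bs : Finset (Finset V))
    (z : V) : ℝ :=
  ∑ w ∈ G.neighborFinset z, if ∃ B ∈ Bs, z ∈ B ∧ w ∈ B then 0 else influence β (J z w)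

/-- The path-coupling distance metric used for block dynamics. -/
def pcDist (G : SimpleGraph V) (β : ℝ) (J : V → V → ℝ) (Bs : Finset (Finset V))
    (σ τ : Config V) : ℝ :=
  ∑ z : V, if σ z ≠ τ z then
      (if 0 < aggInfluenceOut G β J Bs z then
        (Fintype.card V : ℝ) ^ 4 * aggInfluenceOut G β J Bs z else 1)
    else 0

/-! ### Dynamics with boundary conditions -/

/-- Single-site Glauber dynamics on a block `B` with boundary condition `bc` on `∂_out B`. -/
def glauberOnP (G : SimpleGraph V) (β : ℝ) (J : V → V → ℝ) (B : Finset V) (bc : Config V) :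
    Matrix {τ : Config V // ∀ w, w ∉ B → τ w = bc w}
      {τ : Config V // ∀ w, w ∉ B → τ w = bc w} ℝ := fun σ τ =>
  (B.card : ℝ)⁻¹ * ∑ v ∈ B,
    if ∀ w, w ≠ v → (τ : Config V) w = (σ : Config V) w then
      gibbsWeight G β J (τ : Config V) /
        (gibbsWeight G β J (Function.update (σ : Config V) v true) +
          gibbsWeight G β J (Function.update (σ : Config V) v false))
    else 0

/-- Block dynamics on a subgraph `S` with blocks `blocks` and boundary condition `bc`. -/
def blockOnP (G : SimpleGraph V) (β : ℝ) (J : V → V → ℝ) (S : Finset V)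
    (blocks : Finset (Finset V)) (bc : Config V) :
    Matrix {τ : Config V // ∀ w, w ∉ S → τ w = bc w}
      {τ : Config V // ∀ w, w ∉ S → τ w = bc w} ℝ := fun σ τ =>
  (blocks.card : ℝ)⁻¹ * ∑ B ∈ blocks,
    if ∀ w ∉ B, (τ : Config V) w = (σ : Config V) w then
      gibbsWeight G β J (τ : Config V) /
        ∑ τ' ∈ Finset.univ.filter (fun τ' : Config V => ∀ w ∉ B, τ' w = (σ : Config V) w),
          gibbsWeight G β J τ'
    else 0

/-! ### The collection of trees 𝒯 associated with a block partition -/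

/-- `(S, v)` is a rooted tree of the collection `𝒯(ℬ)`. -/
def InTreeColl (n : ℕ) (d ε : ℝ) (G : SimpleGraph V) (β : ℝ) (J : V → V → ℝ)
    (Bs : Finset (Finset V)) (S : Finset V) (v : V) : Prop :=
  (∃ B ∈ Bs, 2 ≤ B.card ∧ spanEdgeCount G B < B.card ∧ S = B ∪ outBoundary G B ∧
    v ∈ B ∧ 1 - ε / 2 < aggInfluence G β J v) ∨
  (∃ B ∈ Bs, ∃ (w : V) (c : G.Walk w w), c.IsCycle ∧ (∀ x ∈ c.support, x ∈ B) ∧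
    v ∈ c.support ∧
    S = (B ∪ outBoundary G B).filter fun x =>
      ∃ p : (G.deleteEdges {e | e ∈ c.edges}).Walk v x, ∀ y ∈ p.support, y ∈ B ∪ outBoundary G B)

/-- `m(T,v)`: the maximum of `Υ(P)` over all root-to-leaf paths of the tree with
vertex set `S` rooted at `v`. -/
def mTree (G : SimpleGraph V) (β : ℝ) (J : V → V → ℝ) (S : Finset V) (v : V) : ℝ :=
  sSup {x : ℝ | ∃ (w : V) (p : G.Walk v w), p.IsPath ∧ (∀ y ∈ p.support, y ∈ S) ∧
    (G.neighborFinset w ∩ S).card ≤ 1 ∧ x = upsilon G β J p}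

/-- The subtree `T_u` of the tree with vertex set `S` rooted at `v`, consisting of
`u` together with all of its descendants. -/
def subtreeAt (G : SimpleGraph V) (S : Finset V) (v u : V) : Finset V :=
  S.filter fun w => ∀ p : G.Walk v w, p.IsPath → (∀ y ∈ p.support, y ∈ S) → u ∈ p.support

/-! ### Locally simple paths -/

/-- `N_r(P)`: the set of vertices reachable from the path `p` by a path of length at most `r`. -/
def NrSet (G : SimpleGraph V) {u w : V} (p : G.Walk u w) (r : ℝ) : Set V :=
  {x | ∃ y ∈ p.support, ∃ q : G.Walk y x, (q.length : ℝ) ≤ r}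



/-! ### Auxiliary lemmas for the proof of Statement 1 -/

section AuxTail

open scoped ENNReal NNReal

private lemma expNegDeriv (x : ℝ) :
    HasDerivAt (fun y : ℝ => Real.exp (-y)) (-Real.exp (-x)) x := by
  exact ((Real.hasDerivAt_exp (-x)).comp x ((hasDerivAt_id x).neg)).congr_deriv (by simp)

private lemma expP1 {s : ℝ} (hs : 0 ≤ s) : Real.exp (-s) ≤ 1 - s + s ^ 2 / 2 := by
  set g : ℝ → ℝ := fun y => 1 - y + y ^ 2 / 2 - Real.exp (-y) with hg
  have hder : ∀ x : ℝ, HasDerivAt g (-1 + x + Real.exp (-x)) x := by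
    intro x
    have h1 : HasDerivAt (fun y : ℝ => 1 - y + y ^ 2 / 2) (-1 + x) x := by
      have := ((hasDerivAt_id x).const_sub 1).add
        (((hasDerivAt_id x).pow 2).div_const 2)
      exact this.congr_deriv (by simp only [id_eq]; ring)
    exact (h1.sub (expNegDeriv x)).congr_deriv (by ring)
  have hmono : Monotone g := by
    apply monotone_of_deriv_nonneg
    · exact fun x => (hder x).differentiableAt
    · intro x
      rw [(hder x).deriv]
      nlinarith [Real.one_sub_le_exp_neg x]
  have := hmono hs
  simp only [hg] at this
  simp at this
  linarith

private lemma expP2 {s : ℝ} (hs : 0 ≤ s) :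
    1 - s + s ^ 2 / 2 - s ^ 3 / 6 ≤ Real.exp (-s) := by
  set f : ℝ → ℝ := fun y => Real.exp (-y) - (1 - y + y ^ 2 / 2 - y ^ 3 / 6) with hf
  have hder : ∀ x : ℝ, HasDerivAt f (-Real.exp (-x) + 1 - x + x ^ 2 / 2) x := by
    intro x
    have h1 : HasDerivAt (fun y : ℝ => 1 - y + y ^ 2 / 2 - y ^ 3 / 6) (-1 + x - x ^ 2 / 2) x := by
      have := (((hasDerivAt_id x).const_sub 1).add
        (((hasDerivAt_id x).pow 2).div_const 2)).sub (((hasDerivAt_id x).pow 3).div_const 6)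
      exact this.congr_deriv (by simp only [id_eq]; ring)
    exact ((expNegDeriv x).sub h1).congr_deriv (by ring)
  have hmono : MonotoneOn f (Set.Ici 0) := by
    apply monotoneOn_of_deriv_nonneg (convex_Ici 0)
    · exact (Differentiable.continuous (fun x => (hder x).differentiableAt)).continuousOn
    · exact fun x _ => ((hder x).differentiableAt).differentiableWithinAt
    · intro x hx
      rw [(hder x).deriv]
      have hx0 : 0 ≤ x := le_of_lt (by simpa using hx)
      nlinarith [expP1 hx0]
  have := hmono (Set.self_mem_Ici) (Set.mem_Ici.2 hs) hs
  simp only [hf] at this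
  simp at this
  linarith

private lemma influence_nonneg (β x : ℝ) : 0 ≤ influence β x :=
  div_nonneg (abs_nonneg _) (by positivity)

private lemma influence_le_one (β x : ℝ) : influence β x ≤ 1 := by
  unfold influence
  rw [div_le_one (by positivity)]
  rcases abs_cases (1 - Real.exp (β * x)) with ⟨h, _⟩ | ⟨h, _⟩ <;>
    nlinarith [Real.exp_pos (β * x)]

private lemma influence_le_abs (β x : ℝ) : influence β x ≤ |β * x| := by
  unfold influence
  set y := β * x
  rw [div_le_iff₀ (by positivity)]
  rcases le_or_gt 0 y with hy | hy
  · rw [abs_of_nonneg hy,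
      abs_of_nonpos (by nlinarith [Real.add_one_le_exp y] : 1 - Real.exp y ≤ 0)]
    have hm : Real.exp (-y) * Real.exp y = 1 := by rw [← Real.exp_add]; simp
    have h1 : (1 - y) * Real.exp y ≤ 1 := by
      have := mul_le_mul_of_nonneg_right (Real.one_sub_le_exp_neg y) (Real.exp_pos y).le
      rw [hm] at this; linarith
    nlinarith [Real.exp_pos y, mul_nonneg hy (Real.exp_pos y).le]
  · rw [abs_of_neg hy, abs_of_nonneg
      (by nlinarith [Real.exp_lt_one_iff.2 hy] : 0 ≤ 1 - Real.exp y)]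
    nlinarith [Real.add_one_le_exp y, Real.exp_pos y, mul_pos (neg_pos.2 hy) (Real.exp_pos y)]

private lemma measurable_influence (β : ℝ) : Measurable (influence β) := by
  have : Continuous (influence β) := by
    unfold influence
    exact Continuous.div (by continuity) (by continuity)
      (fun x => ne_of_gt (by positivity))
  exact this.measurable

private lemma sq_le_exp_abs {w : ℝ} (hw : 0 ≤ w) : w ^ 2 ≤ Real.exp w := by
  have h := Real.sum_le_exp_of_nonneg hw 4
  norm_num [Finset.sum_range_succ, Nat.factorial] at h
  nlinarith [mul_nonneg hw (sq_nonneg (w - 3 / 2))]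

private lemma exp_taylor2 {s : ℝ} (hs : 0 ≤ s) :
    Real.exp s - 1 - s ≤ s ^ 2 * Real.exp s / 2 := by
  have key : 1 - s ^ 2 / 2 ≤ (1 + s) * Real.exp (-s) := by
    rcases le_or_gt s 2 with h2 | h2
    · have hc := expP2 hs
      nlinarith [pow_nonneg hs 3, pow_nonneg hs 2]
    · nlinarith [Real.exp_pos (-s)]
  have hm : Real.exp (-s) * Real.exp s = 1 := by rw [← Real.exp_add]; simp
  have hp := Real.exp_pos s
  have := mul_le_mul_of_nonneg_right key hp.le
  nlinarith

private lemma gauss_density (g : ℝ → ℝ) :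
    ∫ x, g x ∂(gaussianReal 0 1) = ∫ x, gaussianPDFReal 0 1 x * g x := by
  rw [gaussianReal_of_var_ne_zero 0 one_ne_zero]
  have hd : gaussianPDF 0 1 = fun x => ((gaussianPDFReal 0 1 x).toNNReal : ℝ≥0∞) := rfl
  rw [hd, integral_withDensity_eq_integral_smul
    ((measurable_gaussianPDFReal 0 1).real_toNNReal) g]
  congr 1; funext x
  simp [NNReal.smul_def, Real.coe_toNNReal _ (gaussianPDFReal_nonneg 0 1 x)]

private lemma gauss_shift (s : ℝ) (x : ℝ) :
    gaussianPDFReal 0 1 x * Real.exp (s * x)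
      = Real.exp (s ^ 2 / 2) * gaussianPDFReal s 1 x := by
  simp only [gaussianPDFReal]
  have h : Real.exp (-(x - 0) ^ 2 / (2 * ((1 : ℝ≥0) : ℝ))) * Real.exp (s * x)
      = Real.exp (s ^ 2 / 2) * Real.exp (-(x - s) ^ 2 / (2 * ((1 : ℝ≥0) : ℝ))) := by
    rw [← Real.exp_add, ← Real.exp_add]; congr 1; push_cast; ring
  calc (Real.sqrt (2 * Real.pi * ((1 : ℝ≥0) : ℝ)))⁻¹
        * Real.exp (-(x - 0) ^ 2 / (2 * ((1 : ℝ≥0) : ℝ))) * Real.exp (s * x)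
      = (Real.sqrt (2 * Real.pi * ((1 : ℝ≥0) : ℝ)))⁻¹
        * (Real.exp (-(x - 0) ^ 2 / (2 * ((1 : ℝ≥0) : ℝ))) * Real.exp (s * x)) := by ring
    _ = (Real.sqrt (2 * Real.pi * ((1 : ℝ≥0) : ℝ)))⁻¹
        * (Real.exp (s ^ 2 / 2) * Real.exp (-(x - s) ^ 2 / (2 * ((1 : ℝ≥0) : ℝ)))) := by rw [h]
    _ = _ := by ring

private lemma integrable_exp_mul_gauss (s : ℝ) :
    Integrable (fun x => Real.exp (s * x)) (gaussianReal 0 1) := by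
  rw [gaussianReal_of_var_ne_zero 0 one_ne_zero]
  have hd : gaussianPDF 0 1 = fun x => ((gaussianPDFReal 0 1 x).toNNReal : ℝ≥0∞) := rfl
  rw [hd, integrable_withDensity_iff_integrable_smul
    ((measurable_gaussianPDFReal 0 1).real_toNNReal)]
  have heq : (fun x => ((gaussianPDFReal 0 1 x).toNNReal : ℝ≥0) • Real.exp (s * x))
      = fun x => Real.exp (s ^ 2 / 2) * gaussianPDFReal s 1 x := by
    funext x
    rw [NNReal.smul_def, Real.coe_toNNReal _ (gaussianPDFReal_nonneg 0 1 x),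
      smul_eq_mul, gauss_shift]
  rw [heq]
  exact (integrable_gaussianPDFReal s 1).const_mul _

private lemma integral_exp_mul_gauss (s : ℝ) :
    ∫ x, Real.exp (s * x) ∂(gaussianReal 0 1) = Real.exp (s ^ 2 / 2) := by
  rw [gauss_density]
  simp_rw [gauss_shift s]
  rw [integral_const_mul, integral_gaussianPDFReal_eq_one s one_ne_zero, mul_one]

private lemma exp_abs_le (s x : ℝ) :
    Real.exp (s * |x|) ≤ Real.exp (s * x) + Real.exp (-s * x) := by
  rcases abs_cases x with ⟨h, _⟩ | ⟨h, _⟩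
  · rw [h]; linarith [(Real.exp_pos (-s * x)).le]
  · rw [h, mul_neg, ← neg_mul]; linarith [(Real.exp_pos (s * x)).le]

private lemma integrable_exp_abs_gauss {s : ℝ} (hs : 0 ≤ s) :
    Integrable (fun x => Real.exp (s * |x|)) (gaussianReal 0 1) := by
  refine Integrable.mono' ((integrable_exp_mul_gauss s).add (integrable_exp_mul_gauss (-s)))
    (Measurable.aestronglyMeasurable (by measurability)) (ae_of_all _ fun x => ?_)
  rw [Real.norm_eq_abs, abs_of_nonneg (Real.exp_pos _).le]
  exact exp_abs_le s x

private lemma integral_exp_abs_gauss {s : ℝ} (hs : 0 ≤ s) :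
    ∫ x, Real.exp (s * |x|) ∂(gaussianReal 0 1) ≤ 2 * Real.exp (s ^ 2 / 2) := by
  have h1 : ∫ x, Real.exp (s * |x|) ∂(gaussianReal 0 1)
      ≤ ∫ x, (Real.exp (s * x) + Real.exp (-s * x)) ∂(gaussianReal 0 1) := by
    exact integral_mono (integrable_exp_abs_gauss hs)
      ((integrable_exp_mul_gauss s).add (integrable_exp_mul_gauss (-s)))
      (fun x => exp_abs_le s x)
  rw [integral_add (integrable_exp_mul_gauss s) (integrable_exp_mul_gauss (-s)),
    integral_exp_mul_gauss, integral_exp_mul_gauss] at h1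
  have : (-s) ^ 2 = s ^ 2 := by ring
  rw [this] at h1
  linarith

private lemma integral_bernoulliBool {p : ℝ} (hp0 : 0 ≤ p) (hp1 : p ≤ 1) (g : Bool → ℝ) :
    ∫ b, g b ∂(bernoulliBool p) = p * g true + (1 - p) * g false := by
  unfold bernoulliBool
  haveI : IsProbabilityMeasure
      ((PMF.bernoulli (min (Real.toNNReal p) 1) (min_le_right _ _)).toMeasure) :=
    PMF.toMeasure.isProbabilityMeasure _
  rw [MeasureTheory.integral_fintype Integrable.of_finite]
  have hmin : min (Real.toNNReal p) 1 = Real.toNNReal p :=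
    min_eq_left (Real.toNNReal_le_one.2 hp1)
  have h1 : ∀ b, ((PMF.bernoulli (min (Real.toNNReal p) 1) (min_le_right _ _)).toMeasure {b})
      = (PMF.bernoulli (min (Real.toNNReal p) 1) (min_le_right _ _)) b := fun b =>
    PMF.toMeasure_apply_singleton _ b (measurableSet_singleton b)
  simp only [Measure.real]
  rw [Fintype.sum_bool, h1, h1]
  simp only [PMF.bernoulli_apply, cond_true, cond_false, hmin]
  simp [smul_eq_mul, Real.coe_toNNReal _ hp0, NNReal.coe_sub (Real.toNNReal_le_one.2 hp1)]
  left
  rw [ENNReal.toReal_sub_of_le (by simpa using hp1) ENNReal.one_ne_top]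
  simp [Real.coe_toNNReal _ hp0]

instance bernoulliBool_isProb (p : ℝ) : IsProbabilityMeasure (bernoulliBool p) :=
  PMF.toMeasure.isProbabilityMeasure _

instance eaMeasure_isProb (n : ℕ) (d : ℝ) : IsProbabilityMeasure (eaMeasure n d) := by
  unfold eaMeasure; infer_instance

private lemma piIntegral {ι : Type*} [Fintype ι] {E : Type*} [MeasurableSpace E]
    (μ : Measure E) [SigmaFinite μ] (f : ι → E → ℝ) :
    ∫ x : ι → E, ∏ i, f i (x i) ∂(Measure.pi fun _ => μ) = ∏ i, ∫ x, f i x ∂μ := by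
  letI : MeasureSpace E := ⟨μ⟩
  exact MeasureTheory.integral_fintype_prod_eq_prod (μ := fun _ => μ) f

private lemma measurable_boolFun {h : Bool → ℝ → ℝ} (hm : ∀ b, Measurable (h b)) :
    Measurable (fun q : Bool × ℝ => h q.1 q.2) := by
  have : (fun q : Bool × ℝ => h q.1 q.2)
      = fun q => if q.1 = true then h true q.2 else h false q.2 := by
    funext q; cases hq : q.1 <;> simp
  rw [this]
  exact Measurable.ite (measurable_fst (measurableSet_singleton true))
    ((hm true).comp measurable_snd) ((hm false).comp measurable_snd)

/-- Key factorization lemma: the integral of a product over independent coordinates. -/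
private lemma eaIntegral_prod (n : ℕ) (d : ℝ) (h : Sym2 (Fin n) → Bool → ℝ → ℝ)
    (hmeas : ∀ e b, Measurable (h e b)) (C : ℝ)
    (hbd : ∀ e b x, |h e b x| ≤ C) :
    ∫ ω, ∏ e, h e (ω.1 e) (ω.2 e) ∂(eaMeasure n d)
      = ∏ e, ∫ b, ∫ x, h e b x ∂(gaussianReal 0 1) ∂(bernoulliBool (d / n)) := by
  have hF : Measurable fun ω : (Sym2 (Fin n) → Bool) × (Sym2 (Fin n) → ℝ) =>
      ∏ e, h e (ω.1 e) (ω.2 e) := by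
    refine Finset.measurable_prod _ (fun e _ => ?_)
    have hco : Measurable fun ω : (Sym2 (Fin n) → Bool) × (Sym2 (Fin n) → ℝ) =>
        (ω.1 e, ω.2 e) :=
      ((measurable_pi_apply e).comp' measurable_fst).prodMk
        ((measurable_pi_apply e).comp' measurable_snd)
    exact (measurable_boolFun (hmeas e)).comp hco
  rcases isEmpty_or_nonempty (Sym2 (Fin n)) with hemp | hne
  · simp [Finset.univ_eq_empty]
  have hC : 0 ≤ C := le_trans (abs_nonneg _) (hbd (Classical.arbitrary _) true 0)
  have hInt : Integrable (fun ω : (Sym2 (Fin n) → Bool) × (Sym2 (Fin n) → ℝ) =>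
      ∏ e, h e (ω.1 e) (ω.2 e)) (eaMeasure n d) := by
    refine Integrable.mono' (integrable_const (C ^ Fintype.card (Sym2 (Fin n))))
      hF.aestronglyMeasurable (ae_of_all _ fun ω => ?_)
    rw [Real.norm_eq_abs, Finset.abs_prod]
    calc ∏ e, |h e (ω.1 e) (ω.2 e)| ≤ ∏ _e : Sym2 (Fin n), C :=
          Finset.prod_le_prod (fun e _ => abs_nonneg _) (fun e _ => hbd e _ _)
      _ = C ^ Fintype.card (Sym2 (Fin n)) := by
          rw [Finset.prod_const, Finset.card_univ]
  rw [show eaMeasure n d = (Measure.pi fun _ : Sym2 (Fin n) => bernoulliBool (d / n)).prod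
      (Measure.pi fun _ : Sym2 (Fin n) => gaussianReal 0 1) from rfl] at hInt ⊢
  rw [MeasureTheory.integral_prod _ hInt]
  have hin : ∀ η : Sym2 (Fin n) → Bool,
      (∫ J : Sym2 (Fin n) → ℝ, ∏ e, h e (η e) (J e)
        ∂(Measure.pi fun _ => gaussianReal 0 1))
      = ∏ e, ∫ x, h e (η e) x ∂(gaussianReal 0 1) := fun η =>
    piIntegral (gaussianReal 0 1) (fun e x => h e (η e) x)
  simp_rw [hin]
  exact piIntegral (bernoulliBool (d / n))
    (fun e b => ∫ x, h e b x ∂(gaussianReal 0 1))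

private lemma aggInfluence_graphOf {n : ℕ} (η : Sym2 (Fin n) → Bool)
    (J : Sym2 (Fin n) → ℝ) (β : ℝ) (u : Fin n) :
    aggInfluence (graphOf η) β (coupOf J) u
      = ∑ z ∈ Finset.univ.erase u,
          (if η s(u, z) = true then influence β (J s(u, z)) else 0) := by
  unfold aggInfluence
  have h1 : (graphOf η).neighborFinset u
      = (Finset.univ.erase u).filter (fun z => η s(u, z) = true) := by
    ext z
    simp only [SimpleGraph.mem_neighborFinset, Finset.mem_filter, Finset.mem_erase,
      Finset.mem_univ, and_true, true_and]
    show (u ≠ z ∧ η s(u, z) = true) ↔ _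
    constructor
    · rintro ⟨h, h2⟩; exact ⟨fun hz => h hz.symm, h2⟩
    · rintro ⟨h, h2⟩; exact ⟨fun hz => h hz.symm, h2⟩
  rw [h1, Finset.sum_filter]
  rfl

private lemma centered_exp_pt {β t A : ℝ} (hβ : 0 < β) (ht : 0 ≤ t) (hA0 : 0 < A)
    (htβ : t * β ≤ A) (x : ℝ) :
    Real.exp (t * influence β x) - 1 - t * influence β x
      ≤ A ^ 2 / 2 * Real.exp ((1 + A) * |x|) := by
  have hΓ0 := influence_nonneg β x
  have hs0 : 0 ≤ t * influence β x := mul_nonneg ht hΓ0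
  have hsA : t * influence β x ≤ A * |x| := by
    have h1 : influence β x ≤ β * |x| := by
      calc influence β x ≤ |β * x| := influence_le_abs β x
        _ = β * |x| := by rw [abs_mul, abs_of_pos hβ]
    calc t * influence β x ≤ t * (β * |x|) := mul_le_mul_of_nonneg_left h1 ht
      _ = (t * β) * |x| := by ring
      _ ≤ A * |x| := mul_le_mul_of_nonneg_right htβ (abs_nonneg x)
  have h2 := exp_taylor2 hs0
  have h3 : (t * influence β x) ^ 2 * Real.exp (t * influence β x) / 2
      ≤ (A * |x|) ^ 2 * Real.exp (A * |x|) / 2 := by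
    have e1 : (t * influence β x) ^ 2 ≤ (A * |x|) ^ 2 := pow_le_pow_left₀ hs0 hsA 2
    have e2 : Real.exp (t * influence β x) ≤ Real.exp (A * |x|) := Real.exp_le_exp.2 hsA
    have := mul_le_mul e1 e2 (Real.exp_pos _).le (by positivity)
    linarith
  have h4 : (A * |x|) ^ 2 * Real.exp (A * |x|) / 2
      ≤ A ^ 2 / 2 * Real.exp ((1 + A) * |x|) := by
    have e3 : |x| ^ 2 ≤ Real.exp |x| := sq_le_exp_abs (abs_nonneg x)
    have e4 : Real.exp ((1 + A) * |x|) = Real.exp |x| * Real.exp (A * |x|) := by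
      rw [← Real.exp_add]; congr 1; ring
    rw [e4, mul_pow]
    have := mul_le_mul_of_nonneg_right e3 (Real.exp_pos (A * |x|)).le
    nlinarith [sq_nonneg A, Real.exp_pos (A * |x|)]
  linarith

private lemma tail_core_arith {ε γ K r c : ℝ} (hε : 0 < ε) (hε1 : ε < 1)
    (hγdef : γ = 1 - ε) (hK1 : 1 ≤ K) (hK4 : K ≤ 4)
    (hr0 : 0 < r) (hr2 : r ^ 2 = 2 * Real.pi)
    (hcdef : c = min (ε / (8 * Real.pi * γ ^ 2 * K)) (1 / (2 * γ * r))) :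
    2 * Real.pi * c ^ 2 * γ ^ 2 * K - c * ε / 2 ≤ -(ε ^ 4 / (8 * Real.pi)) := by
  have hπ := Real.pi_pos
  have hγ0 : 0 < γ := by rw [hγdef]; linarith
  have hγε : γ * ε ≤ 1 / 4 := by rw [hγdef]; nlinarith [sq_nonneg (1 - 2 * ε)]
  rcases min_cases (ε / (8 * Real.pi * γ ^ 2 * K)) (1 / (2 * γ * r)) with
    ⟨hceq, _⟩ | ⟨hceq, hclt⟩
  · rw [hcdef, hceq]
    have hg4 : 4 * γ ^ 2 * ε ^ 2 * K ≤ 1 := by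
      nlinarith [mul_nonneg hγ0.le hε.le, hγε, hK4, hK1,
        mul_nonneg (mul_nonneg hγ0.le hε.le) (mul_nonneg hγ0.le hε.le)]
    have h1 : 2 * Real.pi * (ε / (8 * Real.pi * γ ^ 2 * K)) ^ 2 * γ ^ 2 * K
        = ε ^ 2 / (32 * Real.pi * γ ^ 2 * K) := by
      field_simp
      ring
    have h2 : (ε / (8 * Real.pi * γ ^ 2 * K)) * ε / 2
        = ε ^ 2 / (16 * Real.pi * γ ^ 2 * K) := by
      field_simp
      ring
    rw [h1, h2]
    have h3 : ε ^ 4 / (8 * Real.pi) ≤ ε ^ 2 / (32 * Real.pi * γ ^ 2 * K) := by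
      rw [div_le_div_iff₀ (by positivity) (by positivity)]
      nlinarith [hg4, pow_pos hε 2, hπ, mul_pos (pow_pos hε 2) hπ]
    have h5 : ε ^ 2 / (32 * Real.pi * γ ^ 2 * K)
        = ε ^ 2 / (16 * Real.pi * γ ^ 2 * K) - ε ^ 2 / (32 * Real.pi * γ ^ 2 * K) := by
      field_simp
      ring
    linarith
  · rw [hcdef, hceq]
    have hc2 : (1 / (2 * γ * r)) ^ 2 = 1 / (8 * Real.pi * γ ^ 2) := by
      rw [div_pow, one_pow, mul_pow, mul_pow, hr2]
      ring_nf
    have hLHS : 2 * Real.pi * (1 / (2 * γ * r)) ^ 2 * γ ^ 2 * K = K / 4 := by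
      rw [hc2]
      field_simp
      ring
    rw [hLHS]
    have h6 : 2 * γ * r * K ≤ ε := by
      have hclt' : 1 / (2 * γ * r) ≤ ε / (8 * Real.pi * γ ^ 2 * K) := le_of_lt hclt
      rw [div_le_div_iff₀ (by positivity) (by positivity)] at hclt'
      have h7 := mul_le_mul_of_nonneg_right hclt' hr0.le
      have e : ε * (2 * γ * r) * r = 2 * γ * ε * r ^ 2 := by ring
      rw [e, hr2] at h7
      nlinarith [h7, mul_pos hπ hγ0]
    have h8 : K / 2 ≤ (1 / (2 * γ * r)) * ε / 2 := by
      have h8' : K ≤ (1 / (2 * γ * r)) * ε := by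
        rw [one_div, inv_mul_eq_div, le_div_iff₀ (by positivity : (0:ℝ) < 2 * γ * r)]
        nlinarith [h6]
      linarith
    have h9 : ε ^ 4 / (8 * Real.pi) ≤ K / 4 := by
      have hε4 : ε ^ 4 ≤ 1 := by
        calc ε ^ 4 ≤ 1 ^ 4 := pow_le_pow_left₀ hε.le hε1.le 4
          _ = 1 := one_pow 4
      have e2 : ε ^ 4 / (8 * Real.pi) ≤ 1 / (8 * Real.pi) :=
        div_le_div_of_nonneg_right hε4 (by positivity) |>.trans_eq rfl
      have e3 : 1 / (8 * Real.pi) ≤ 1 / 4 := by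
        rw [div_le_div_iff₀ (by positivity) (by norm_num)]
        nlinarith [Real.pi_gt_three]
      linarith
    linarith

end AuxTail

set_option maxHeartbeats 2000000 in
private theorem aggInfluence_tail_bound_aux (ε : ℝ) (hε : 0 < ε) :
    ∃ d₀ : ℝ, 1 ≤ d₀ ∧ ∀ d : ℝ, d₀ ≤ d → ∀ β : ℝ, 0 < β → β ≤ (1 - ε) * betaC d →
      ∃ n₀ : ℕ, ∀ n : ℕ, n₀ ≤ n → ∀ u : Fin n,
        eaMeasure n d {ω |
            (∫ ω', aggInfluence (graphOf ω'.1) β (coupOf ω'.2) u ∂(eaMeasure n d)) + ε / 2 ≤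
              aggInfluence (graphOf ω.1) β (coupOf ω.2) u} ≤
          ENNReal.ofReal (Real.exp (-(ε ^ 4 / (8 * Real.pi)) * d)) := by
  have hπ := Real.pi_pos
  refine ⟨1, le_refl 1, fun d hd β hβ hβc => ?_⟩
  have hd0 : (0 : ℝ) < d := lt_of_lt_of_le one_pos hd
  rcases lt_or_ge ε 1 with hε1 | hε1
  swap
  · -- vacuous case : `β ≤ (1-ε) β_c(d) ≤ 0 < β`
    exfalso
    have hbc : 0 < betaC d := div_pos (Real.sqrt_pos.2 (by positivity)) hd0
    nlinarith [mul_nonpos_of_nonpos_of_nonneg (by linarith : 1 - ε ≤ 0) hbc.le]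
  refine ⟨⌈d⌉₊, fun n hn u => ?_⟩
  -- numerical setup
  set γ : ℝ := 1 - ε with hγdef
  have hγ0 : 0 < γ := by rw [hγdef]; linarith
  have hγ1 : γ ≤ 1 := by rw [hγdef]; linarith
  set K : ℝ := Real.exp (9 / 8) with hKdef
  have hK1 : 1 ≤ K := by rw [hKdef]; exact Real.one_le_exp (by norm_num)
  have hK4 : K ≤ 4 := by
    rw [hKdef]
    have h4 : Real.log 4 = 2 * Real.log 2 := by
      rw [show (4 : ℝ) = 2 ^ 2 by norm_num, Real.log_pow]; push_cast; ring
    have h48 : (9 : ℝ) / 8 ≤ Real.log 4 := by rw [h4]; nlinarith [Real.log_two_gt_d9]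
    calc Real.exp (9 / 8) ≤ Real.exp (Real.log 4) := Real.exp_le_exp.2 h48
      _ = 4 := Real.exp_log (by norm_num)
  set r : ℝ := Real.sqrt (2 * Real.pi) with hrdef
  have hr0 : 0 < r := Real.sqrt_pos.2 (by positivity)
  have hr2 : r ^ 2 = 2 * Real.pi := Real.sq_sqrt (by positivity)
  set c : ℝ := min (ε / (8 * Real.pi * γ ^ 2 * K)) (1 / (2 * γ * r)) with hcdef
  have hc0 : 0 < c := lt_min (by positivity) (by positivity)
  set t : ℝ := c * d with htdef
  have ht0 : 0 < t := mul_pos hc0 hd0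
  set A : ℝ := c * γ * r with hAdef
  have hA0 : 0 < A := by positivity
  have hA2 : A ≤ 1 / 2 := by
    have hcle : c ≤ 1 / (2 * γ * r) := min_le_right _ _
    rw [hAdef]
    calc c * γ * r ≤ (1 / (2 * γ * r)) * γ * r := by
          apply mul_le_mul_of_nonneg_right (mul_le_mul_of_nonneg_right hcle hγ0.le) hr0.le
      _ = 1 / 2 := by field_simp
  have hβr : β ≤ γ * r / d := by
    have : betaC d = r / d := by rw [betaC, hrdef]
    rw [this] at hβc
    calc β ≤ (1 - ε) * (r / d) := hβc
      _ = γ * r / d := by rw [hγdef]; ring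
  have htβ : t * β ≤ A := by
    have h1 : t * β ≤ (c * d) * (γ * r / d) :=
      mul_le_mul_of_nonneg_left hβr (by positivity)
    calc t * β ≤ (c * d) * (γ * r / d) := h1
      _ = A := by rw [hAdef]; field_simp
  -- measure-theoretic setup
  haveI : IsProbabilityMeasure (eaMeasure n d) := eaMeasure_isProb n d
  have hn0 : (0 : ℝ) < n := by
    have h1 : 1 ≤ ⌈d⌉₊ := Nat.one_le_ceil_iff.2 hd0
    have : (1 : ℕ) ≤ n := le_trans h1 hn
    exact_mod_cast this
  set p : ℝ := d / n with hpdef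
  have hp0 : 0 ≤ p := by positivity
  have hp1 : p ≤ 1 := by
    rw [hpdef, div_le_one hn0]
    exact le_trans (Nat.le_ceil d) (Nat.cast_le.2 hn)
  set gs := gaussianReal 0 1 with hgsdef
  set F : Bool → ℝ → ℝ := fun b x => if b = true then influence β x else 0 with hFdef
  have hF0 : ∀ b x, 0 ≤ F b x := by
    intro b x; rw [hFdef]; dsimp only
    split
    · exact influence_nonneg β x
    · exact le_refl 0
  have hF1 : ∀ b x, F b x ≤ 1 := by
    intro b x; rw [hFdef]; dsimp only
    split
    · exact influence_le_one β x
    · exact zero_le_one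
  have hFmeas : ∀ b, Measurable (F b) := by
    intro b; rw [hFdef]; dsimp only
    split
    · exact measurable_influence β
    · exact measurable_const
  set X : (Sym2 (Fin n) → Bool) × (Sym2 (Fin n) → ℝ) → ℝ :=
    fun ω => aggInfluence (graphOf ω.1) β (coupOf ω.2) u with hXdef
  have hXeq : ∀ ω, X ω = ∑ z ∈ Finset.univ.erase u, F (ω.1 s(u, z)) (ω.2 s(u, z)) := by
    intro ω
    rw [hXdef]
    exact aggInfluence_graphOf ω.1 ω.2 β u
  set N : ℕ := (Finset.univ.erase u).card with hNdef
  have hNn : (N : ℝ) ≤ n := by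
    rw [hNdef]
    calc ((Finset.univ.erase u).card : ℝ) ≤ ((Finset.univ : Finset (Fin n)).card : ℝ) := by
          exact_mod_cast Finset.card_le_card (Finset.erase_subset u Finset.univ)
      _ = n := by rw [Finset.card_univ, Fintype.card_fin]
  -- Gaussian integrals
  have hΓmeas : Measurable (influence β) := measurable_influence β
  have hΓint : Integrable (influence β) gs := by
    refine Integrable.mono' (integrable_const 1) hΓmeas.aestronglyMeasurable
      (ae_of_all _ fun x => ?_)
    rw [Real.norm_eq_abs, abs_of_nonneg (influence_nonneg β x)]
    exact influence_le_one β x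
  set I1 : ℝ := ∫ x, influence β x ∂gs with hI1def
  set It : ℝ := ∫ x, Real.exp (t * influence β x) ∂gs with hItdef
  have hexpΓmeas : Measurable fun x => Real.exp (t * influence β x) :=
    Real.measurable_exp.comp (hΓmeas.const_mul t)
  have hexpΓbd : ∀ x, Real.exp (t * influence β x) ≤ Real.exp t := fun x => Real.exp_le_exp.2 (by
    calc t * influence β x ≤ t * 1 := mul_le_mul_of_nonneg_left (influence_le_one β x) ht0.le
      _ = t := mul_one t)
  have hexpΓint : Integrable (fun x => Real.exp (t * influence β x)) gs := by
    refine Integrable.mono' (integrable_const (Real.exp t)) hexpΓmeas.aestronglyMeasurable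
      (ae_of_all _ fun x => ?_)
    rw [Real.norm_eq_abs, abs_of_nonneg (Real.exp_pos _).le]
    exact hexpΓbd x
  have hIt1 : 1 ≤ It := by
    rw [hItdef]
    calc (1 : ℝ) = ∫ _x, (1 : ℝ) ∂gs := by simp
      _ ≤ ∫ x, Real.exp (t * influence β x) ∂gs := by
          refine integral_mono (integrable_const 1) hexpΓint (fun x => ?_)
          exact Real.one_le_exp (mul_nonneg ht0.le (influence_nonneg β x))
  have hpoint : ∀ x, Real.exp (t * influence β x) - 1 - t * influence β x
      ≤ A ^ 2 / 2 * Real.exp ((1 + A) * |x|) :=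
    fun x => centered_exp_pt hβ ht0.le hA0 htβ x
  -- the centered quantity D
  have hi1 : Integrable (fun x => Real.exp (t * influence β x) - 1) gs :=
    hexpΓint.sub (integrable_const 1)
  have hi2 : Integrable (fun x => t * influence β x) gs := hΓint.const_mul t
  have hi3 : Integrable (fun x => Real.exp (t * influence β x) - 1 - t * influence β x) gs :=
    hi1.sub hi2
  have hIdiff : ∫ x, (Real.exp (t * influence β x) - 1 - t * influence β x) ∂gs = It - 1 - t * I1 := by
    rw [integral_sub hi1 hi2, integral_sub hexpΓint (integrable_const 1), integral_const_mul]
    simp [hItdef, hI1def]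
  have hD0 : 0 ≤ It - 1 - t * I1 := by
    rw [← hIdiff]
    refine integral_nonneg (fun x => ?_)
    have := Real.add_one_le_exp (t * influence β x)
    simp only [Pi.zero_apply]
    linarith
  have hDK : It - 1 - t * I1 ≤ A ^ 2 * K := by
    rw [← hIdiff]
    have hint2 : Integrable (fun x => A ^ 2 / 2 * Real.exp ((1 + A) * |x|)) gs :=
      (integrable_exp_abs_gauss (by positivity : (0:ℝ) ≤ 1 + A)).const_mul _
    calc ∫ x, (Real.exp (t * influence β x) - 1 - t * influence β x) ∂gs
        ≤ ∫ x, A ^ 2 / 2 * Real.exp ((1 + A) * |x|) ∂gs := by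
          refine integral_mono hi3 hint2 (fun x => hpoint x)
      _ = A ^ 2 / 2 * ∫ x, Real.exp ((1 + A) * |x|) ∂gs := integral_const_mul _ _
      _ ≤ A ^ 2 / 2 * (2 * Real.exp ((1 + A) ^ 2 / 2)) := by
          apply mul_le_mul_of_nonneg_left
            (integral_exp_abs_gauss (by positivity : (0:ℝ) ≤ 1 + A)) (by positivity)
      _ ≤ A ^ 2 * K := by
          have h98 : (1 + A) ^ 2 / 2 ≤ 9 / 8 := by nlinarith
          have := Real.exp_le_exp.2 h98
          rw [hKdef]
          nlinarith [sq_nonneg A, Real.exp_pos ((1 + A) ^ 2 / 2)]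
  -- the single-edge quantities
  set q : ℝ := p * It + (1 - p) with hqdef
  have hq0 : 0 ≤ q := by rw [hqdef]; nlinarith
  have hqle : q ≤ Real.exp (p * (It - 1)) := by
    rw [hqdef]
    have := Real.add_one_le_exp (p * (It - 1))
    nlinarith
  -- the set of edges incident to u
  set Eu : Finset (Sym2 (Fin n)) := (Finset.univ.erase u).image (fun z => s(u, z)) with hEudef
  have hinj : ∀ a ∈ Finset.univ.erase u, ∀ b ∈ Finset.univ.erase u,
      s(u, a) = s(u, b) → a = b := fun a _ b _ hab => Sym2.congr_right.1 hab
  have hcard : Eu.card = N := by rw [hEudef, hNdef]; exact Finset.card_image_of_injOn hinj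
  -- the moment generating function
  set h2 : Sym2 (Fin n) → Bool → ℝ → ℝ :=
    fun e b x => if e ∈ Eu then Real.exp (t * F b x) else 1 with h2def
  have h2meas : ∀ e b, Measurable (h2 e b) := by
    intro e b; rw [h2def]; dsimp only
    split
    · exact Real.measurable_exp.comp ((hFmeas b).const_mul t)
    · exact measurable_const
  have h2bd : ∀ e b x, |h2 e b x| ≤ Real.exp t := by
    intro e b x; rw [h2def]; dsimp only
    split
    · rw [abs_of_nonneg (Real.exp_pos _).le]
      apply Real.exp_le_exp.2
      calc t * F b x ≤ t * 1 := mul_le_mul_of_nonneg_left (hF1 b x) ht0.le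
        _ = t := mul_one t
    · rw [abs_one]; exact Real.one_le_exp ht0.le
  have hkey : ∀ ω : (Sym2 (Fin n) → Bool) × (Sym2 (Fin n) → ℝ),
      (∏ e, h2 e (ω.1 e) (ω.2 e)) = Real.exp (t * X ω) := by
    intro ω
    rw [hXeq ω, Finset.mul_sum, Real.exp_sum, h2def]
    dsimp only
    rw [Fintype.prod_ite_mem Eu (fun e => Real.exp (t * F (ω.1 e) (ω.2 e))), hEudef,
      Finset.prod_image hinj]
  have hmgf : mgf X (eaMeasure n d) t = q ^ N := by
    have h1 : mgf X (eaMeasure n d) t = ∫ ω, ∏ e, h2 e (ω.1 e) (ω.2 e) ∂(eaMeasure n d) := by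
      rw [mgf]
      congr 1
      funext ω
      rw [hkey ω]
    rw [h1, eaIntegral_prod n d h2 h2meas (Real.exp t) h2bd]
    have h2int : ∀ e : Sym2 (Fin n),
        (∫ b, ∫ x, h2 e b x ∂gs ∂(bernoulliBool (d / n))) = if e ∈ Eu then q else 1 := by
      intro e
      by_cases he : e ∈ Eu
      · simp only [h2def, he, if_true]
        rw [show (d / n : ℝ) = p from rfl, integral_bernoulliBool hp0 hp1]
        have hT : (∫ x, Real.exp (t * F true x) ∂gs) = It := by
          rw [hItdef]
          congr 1
        have hFa : (∫ x, Real.exp (t * F false x) ∂gs) = 1 := by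
          have : ∀ x : ℝ, Real.exp (t * F false x) = 1 := by
            intro x; rw [hFdef]; simp
          simp only [this]
          simp
        rw [hT, hFa, hqdef]
        ring
      · simp only [h2def, he, if_false]
        simp only [MeasureTheory.integral_const, measure_univ, ENNReal.toReal_one,
          smul_eq_mul, one_mul, mul_one]
        rw [probReal_univ, hgsdef, probReal_univ, mul_one]
    calc (∏ e, ∫ b, ∫ x, h2 e b x ∂gs ∂(bernoulliBool (d / n)))
        = ∏ e, (if e ∈ Eu then q else 1) := Finset.prod_congr rfl (fun e _ => h2int e)
      _ = ∏ _e ∈ Eu, q := Fintype.prod_ite_mem Eu (fun _ => q)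
      _ = q ^ N := by rw [Finset.prod_const, hcard]
  -- the mean
  have hXmeas : Measurable X := by
    have hXfun : X = fun ω => ∑ z ∈ Finset.univ.erase u, F (ω.1 s(u, z)) (ω.2 s(u, z)) :=
      funext hXeq
    rw [hXfun]
    refine Finset.measurable_sum _ (fun z _ => ?_)
    have hco : Measurable fun ω : (Sym2 (Fin n) → Bool) × (Sym2 (Fin n) → ℝ) =>
        (ω.1 s(u, z), ω.2 s(u, z)) :=
      ((measurable_pi_apply _).comp' measurable_fst).prodMk
        ((measurable_pi_apply _).comp' measurable_snd)
    exact (measurable_boolFun hFmeas).comp hco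
  have hterm : ∀ z ∈ Finset.univ.erase u,
      (∫ ω, F (ω.1 s(u, z)) (ω.2 s(u, z)) ∂(eaMeasure n d)) = p * I1 := by
    intro z _
    set h3 : Sym2 (Fin n) → Bool → ℝ → ℝ :=
      fun e b x => if e = s(u, z) then F b x else 1 with h3def
    have h3meas : ∀ e b, Measurable (h3 e b) := by
      intro e b; rw [h3def]; dsimp only
      split
      · exact hFmeas b
      · exact measurable_const
    have h3bd : ∀ e b x, |h3 e b x| ≤ 1 := by
      intro e b x; rw [h3def]; dsimp only
      split
      · rw [abs_of_nonneg (hF0 b x)]; exact hF1 b x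
      · rw [abs_one]
    have hkey3 : ∀ ω : (Sym2 (Fin n) → Bool) × (Sym2 (Fin n) → ℝ),
        (∏ e, h3 e (ω.1 e) (ω.2 e)) = F (ω.1 s(u, z)) (ω.2 s(u, z)) := by
      intro ω
      rw [h3def]
      dsimp only
      rw [Finset.prod_ite_eq' Finset.univ s(u, z) (fun e => F (ω.1 e) (ω.2 e))]
      simp
    have h1 : (∫ ω, F (ω.1 s(u, z)) (ω.2 s(u, z)) ∂(eaMeasure n d))
        = ∫ ω, ∏ e, h3 e (ω.1 e) (ω.2 e) ∂(eaMeasure n d) := by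
      congr 1
      funext ω
      rw [hkey3 ω]
    rw [h1, eaIntegral_prod n d h3 h3meas 1 h3bd]
    have h3int : ∀ e : Sym2 (Fin n),
        (∫ b, ∫ x, h3 e b x ∂gs ∂(bernoulliBool (d / n)))
          = if e = s(u, z) then p * I1 else 1 := by
      intro e
      by_cases he : e = s(u, z)
      · simp only [h3def, he, if_true]
        rw [show (d / n : ℝ) = p from rfl, integral_bernoulliBool hp0 hp1]
        have hT : (∫ x, F true x ∂gs) = I1 := by
          rw [hI1def]; congr 1
        have hFa : (∫ x, F false x ∂gs) = 0 := by
          have : ∀ x : ℝ, F false x = 0 := by intro x; rw [hFdef]; simp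
          simp only [this]
          simp
        rw [hT, hFa]
        ring
      · simp only [h3def, he, if_false]
        simp only [MeasureTheory.integral_const, measure_univ, ENNReal.toReal_one,
          smul_eq_mul, one_mul, mul_one]
        rw [probReal_univ, hgsdef, probReal_univ, mul_one]
    calc (∏ e, ∫ b, ∫ x, h3 e b x ∂gs ∂(bernoulliBool (d / n)))
        = ∏ e, (if e = s(u, z) then p * I1 else 1) :=
          Finset.prod_congr rfl (fun e _ => h3int e)
      _ = p * I1 := by
          rw [Finset.prod_ite_eq' Finset.univ s(u, z) (fun _ => p * I1)]
          simp
  have hXint_each : ∀ z : Fin n,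
      Integrable (fun ω => F (ω.1 s(u, z)) (ω.2 s(u, z))) (eaMeasure n d) := by
    intro z
    have hco : Measurable fun ω : (Sym2 (Fin n) → Bool) × (Sym2 (Fin n) → ℝ) =>
        (ω.1 s(u, z), ω.2 s(u, z)) :=
      ((measurable_pi_apply _).comp' measurable_fst).prodMk
        ((measurable_pi_apply _).comp' measurable_snd)
    refine Integrable.mono' (integrable_const 1)
      (((measurable_boolFun hFmeas).comp hco)).aestronglyMeasurable
      (ae_of_all _ fun ω => ?_)
    rw [Real.norm_eq_abs, abs_of_nonneg (hF0 _ _)]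
    exact hF1 _ _
  have hmean : (∫ ω, X ω ∂(eaMeasure n d)) = N * (p * I1) := by
    have h1 : (∫ ω, X ω ∂(eaMeasure n d))
        = ∫ ω, ∑ z ∈ Finset.univ.erase u, F (ω.1 s(u, z)) (ω.2 s(u, z)) ∂(eaMeasure n d) := by
      congr 1; funext ω; exact hXeq ω
    rw [h1, integral_finset_sum _ (fun z _ => hXint_each z)]
    rw [Finset.sum_congr rfl hterm, Finset.sum_const, hNdef, nsmul_eq_mul]
  -- integrability of the exponential
  have hmgf_int : Integrable (fun ω => Real.exp (t * X ω)) (eaMeasure n d) := by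
    have hXbd : ∀ ω, X ω ≤ N := by
      intro ω
      rw [hXeq ω]
      calc (∑ z ∈ Finset.univ.erase u, F (ω.1 s(u, z)) (ω.2 s(u, z)))
          ≤ ∑ _z ∈ Finset.univ.erase u, (1 : ℝ) :=
            Finset.sum_le_sum (fun z _ => hF1 _ _)
        _ = N := by rw [Finset.sum_const, hNdef, nsmul_eq_mul, mul_one]
    refine Integrable.mono' (integrable_const (Real.exp (t * N)))
      ((Real.measurable_exp.comp (hXmeas.const_mul t)).aestronglyMeasurable)
      (ae_of_all _ fun ω => ?_)
    rw [Real.norm_eq_abs, abs_of_nonneg (Real.exp_pos _).le]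
    exact Real.exp_le_exp.2 (mul_le_mul_of_nonneg_left (hXbd ω) ht0.le)
  -- Chernoff bound
  set m : ℝ := ∫ ω, X ω ∂(eaMeasure n d) with hmdef
  have hcher := measure_ge_le_exp_mul_mgf (X := X) (μ := eaMeasure n d) (t := t)
    (m + ε / 2) ht0.le hmgf_int
  -- the final real-number estimate
  have hNpD : (N : ℝ) * p * (It - 1 - t * I1) ≤ d * (A ^ 2 * K) := by
    have hNp : (N : ℝ) * p ≤ d := by
      rw [hpdef]
      calc (N : ℝ) * (d / n) ≤ n * (d / n) :=
            mul_le_mul_of_nonneg_right hNn (by positivity)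
        _ = d := by field_simp
    exact mul_le_mul hNp hDK hD0 hd0.le
  have hcore : A ^ 2 * K - c * ε / 2 ≤ -(ε ^ 4 / (8 * Real.pi)) := by
    have hA2K : A ^ 2 = 2 * Real.pi * c ^ 2 * γ ^ 2 := by
      rw [hAdef, mul_pow, mul_pow, hr2]; ring
    rw [hA2K]
    exact tail_core_arith hε hε1 hγdef hK1 hK4 hr0 hr2 hcdef
  have hreal : Real.exp (-t * (m + ε / 2)) * mgf X (eaMeasure n d) t
      ≤ Real.exp (-(ε ^ 4 / (8 * Real.pi)) * d) := by
    rw [hmgf]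
    have hqN : q ^ N ≤ Real.exp ((N : ℝ) * (p * (It - 1))) := by
      calc q ^ N ≤ (Real.exp (p * (It - 1))) ^ N := pow_le_pow_left₀ hq0 hqle N
        _ = Real.exp ((N : ℝ) * (p * (It - 1))) := by
            rw [← Real.exp_nat_mul]
    calc Real.exp (-t * (m + ε / 2)) * q ^ N
        ≤ Real.exp (-t * (m + ε / 2)) * Real.exp ((N : ℝ) * (p * (It - 1))) :=
          mul_le_mul_of_nonneg_left hqN (Real.exp_pos _).le
      _ = Real.exp ((N : ℝ) * p * (It - 1 - t * I1) - t * (ε / 2)) := by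
          rw [← Real.exp_add]
          congr 1
          have hmean' : m = (N : ℝ) * (p * I1) := hmean
          rw [hmean']
          ring
      _ ≤ Real.exp (-(ε ^ 4 / (8 * Real.pi)) * d) := by
          apply Real.exp_le_exp.2
          have h10 : (N : ℝ) * p * (It - 1 - t * I1) - t * (ε / 2)
              ≤ d * (A ^ 2 * K) - t * (ε / 2) := by linarith [hNpD]
          have h11 : d * (A ^ 2 * K) - t * (ε / 2) ≤ -(ε ^ 4 / (8 * Real.pi)) * d := by
            have h12 := mul_le_mul_of_nonneg_left hcore hd0.le
            rw [htdef]
            ring_nf at h12 ⊢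
            linarith
          linarith
  -- conclude
  have hfin : eaMeasure n d {ω | m + ε / 2 ≤ X ω} ≠ ⊤ := measure_ne_top _ _
  calc eaMeasure n d {ω | m + ε / 2 ≤ X ω}
      = ENNReal.ofReal ((eaMeasure n d {ω | m + ε / 2 ≤ X ω}).toReal) :=
        (ENNReal.ofReal_toReal hfin).symm
    _ ≤ ENNReal.ofReal (Real.exp (-(ε ^ 4 / (8 * Real.pi)) * d)) :=
        ENNReal.ofReal_le_ofReal (le_trans hcher hreal)

/-- Tail bound for the aggregate influence of a fixed vertex of the
Edwards–Anderson model on `G(n,d/n)`. -/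
theorem aggInfluence_tail_bound (ε : ℝ) (hε : 0 < ε) :
    ∃ d₀ : ℝ, 1 ≤ d₀ ∧ ∀ d : ℝ, d₀ ≤ d → ∀ β : ℝ, 0 < β → β ≤ (1 - ε) * betaC d →
      ∃ n₀ : ℕ, ∀ n : ℕ, n₀ ≤ n → ∀ u : Fin n,
        eaMeasure n d {ω |
            (∫ ω', aggInfluence (graphOf ω'.1) β (coupOf ω'.2) u ∂(eaMeasure n d)) + ε / 2 ≤
              aggInfluence (graphOf ω.1) β (coupOf ω.2) u} ≤
          ENNReal.ofReal (Real.exp (-(ε ^ 4 / (8 * Real.pi)) * d)) :=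
  aggInfluence_tail_bound_aux ε hε

end EA

end
end

section
/- Let N > 0 be an integer, σ ≥ 0, and let X_1,…,X_N be i.i.d. Gaussian random variables with mean 0 and variance σ². Set X = ∑_{i=1}^{N} |X_i|. Then for every δ ≥ 0, Pr[X > (1+δ)·E[X]] ≤ exp(−N·δ²/π). -/
open MeasureTheory ProbabilityTheory

open Set Filter

lemma tendsto_exp_neg_sq {b : ℝ} (hb : 0 < b) :
    Tendsto (fun y : ℝ => Real.exp (-b * y^2)) atTop (nhds 0) := by
  apply Real.tendsto_exp_atBot.comp
  have h2 : Tendsto (fun y : ℝ => y^2) atTop atTop := tendsto_pow_atTop (by norm_num)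
  simpa [neg_mul] using tendsto_neg_atBot_iff.mpr (h2.const_mul_atTop hb)

lemma integral_Ioi_mul_exp {b : ℝ} (hb : 0 < b) :
    ∫ x in Ioi (0:ℝ), x * Real.exp (-b * x ^ 2) = (2 * b)⁻¹ := by
  have A : ∀ x : ℝ, HasDerivAt (fun y => -(2*b)⁻¹ * Real.exp (-b * y^2))
      (x * Real.exp (-b * x^2)) x := by
    intro x
    have h1 : HasDerivAt (fun y : ℝ => -b * y^2) (-b * (2*x)) x := by
      simpa using ((hasDerivAt_pow 2 x).const_mul (-b))
    have h2 := (h1.exp).const_mul (-(2*b)⁻¹)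
    convert h2 using 1
    · rfl
    · rfl
    have hb2 : (2*b)⁻¹ * (2*b) = 1 := inv_mul_cancel₀ (by positivity)
    linear_combination (-(x * Real.exp (-b*x^2))) * hb2
  have htend : Tendsto (fun y : ℝ => -(2*b)⁻¹ * Real.exp (-b * y^2)) atTop (nhds 0) := by
    simpa using (tendsto_exp_neg_sq hb).const_mul (-(2*b)⁻¹)
  have key := integral_Ioi_of_hasDerivAt_of_tendsto (m := 0)
    (f := fun y => -(2*b)⁻¹ * Real.exp (-b * y^2))
    (f' := fun x => x * Real.exp (-b * x^2)) (a := 0)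
    (HasDerivAt.continuousAt (A 0)).continuousWithinAt
    (fun x _ => A x)
    ((integrable_mul_exp_neg_mul_sq hb).integrableOn)
    htend
  rw [key]; norm_num

lemma integrable_exp_lin_sq {b : ℝ} (hb : 0 < b) (c : ℝ) :
    Integrable fun x : ℝ => Real.exp (c*x - b*x^2) := by
  have h : (fun x : ℝ => Real.exp (c*x - b*x^2))
      = fun x => Real.exp (c^2/(4*b)) * Real.exp (-b * (x - c/(2*b))^2) := by
    ext x; rw [← Real.exp_add]; congr 1; field_simp; ring
  rw [h]
  exact ((integrable_exp_neg_mul_sq hb).comp_sub_right _).const_mul _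

lemma integral_Ioi_shift {b a : ℝ} :
    ∫ x in Ioi a, Real.exp (-b*(x - a)^2) = ∫ x in Ioi (0:ℝ), Real.exp (-b*x^2) := by
  have h := (measurePreserving_add_right volume a).setIntegral_preimage_emb
    (measurableEmbedding_addRight a) (fun y => Real.exp (-b*(y - a)^2)) (Ioi a)
  have hp : (fun x : ℝ => x + a) ⁻¹' Ioi a = Ioi 0 := by
    ext x; simp
  rw [hp] at h
  rw [← h]
  simp

lemma Ioi_exp_bound {b : ℝ} (hb : 0 < b) {t : ℝ} (ht : 0 ≤ t) :
    ∫ x in Ioi (0:ℝ), Real.exp (t*x - b*x^2)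
      ≤ Real.exp (t^2/(4*b)) * (t/(2*b) + Real.sqrt (Real.pi/b)/2) := by
  set a := t/(2*b) with ha
  have ha0 : 0 ≤ a := div_nonneg ht (by positivity)
  have hsq : ∀ x : ℝ, t*x - b*x^2 = t^2/(4*b) + (-b * (x - a)^2) := by
    intro x; rw [ha]; field_simp; ring
  have hrw : ∀ x : ℝ, Real.exp (t*x - b*x^2)
      = Real.exp (t^2/(4*b)) * Real.exp (-b * (x - a)^2) := by
    intro x; rw [hsq x, Real.exp_add]
  simp_rw [hrw]
  rw [integral_const_mul]
  gcongr
  have hint : Integrable fun x : ℝ => Real.exp (-b * (x - a)^2) :=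
    (integrable_exp_neg_mul_sq hb).comp_sub_right _
  have hunion : Ioi (0:ℝ) = Ioc 0 a ∪ Ioi a := (Set.Ioc_union_Ioi_eq_Ioi ha0).symm
  rw [hunion, setIntegral_union (Set.Ioc_disjoint_Ioi le_rfl) measurableSet_Ioi
    hint.integrableOn hint.integrableOn]
  have h1 : ∫ x in Ioc (0:ℝ) a, Real.exp (-b * (x - a)^2) ≤ a := by
    have hb1 : ∀ x ∈ Ioc (0:ℝ) a, ‖Real.exp (-b * (x - a)^2)‖ ≤ 1 := by
      intro x _
      rw [Real.norm_eq_abs, abs_of_pos (Real.exp_pos _), Real.exp_le_one_iff]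
      nlinarith [sq_nonneg (x - a)]
    have hn := norm_setIntegral_le_of_norm_le_const (μ := volume) (s := Ioc (0:ℝ) a) (C := 1)
      (by rw [Real.volume_Ioc]; exact ENNReal.ofReal_lt_top) hb1
    calc ∫ x in Ioc (0:ℝ) a, Real.exp (-b*(x-a)^2)
        ≤ ‖∫ x in Ioc (0:ℝ) a, Real.exp (-b*(x-a)^2)‖ := le_abs_self _
      _ ≤ 1 * (volume (Ioc (0:ℝ) a)).toReal := hn
      _ = a := by
          rw [one_mul, Real.volume_Ioc, ENNReal.toReal_ofReal (by linarith), sub_zero]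
  have h2 : ∫ x in Ioi a, Real.exp (-b * (x - a)^2) = Real.sqrt (Real.pi/b)/2 := by
    rw [show (fun x => Real.exp (-b * (x - a)^2)) = fun x => Real.exp (-b*(x-a)^2) from rfl]
    rw [integral_Ioi_shift, integral_gaussian_Ioi]
  rw [h2]
  exact add_le_add_left h1 _

section aux
variable {v : NNReal}

lemma gauss_pdf_eq (x : ℝ) :
    gaussianPDFReal 0 v x = (Real.sqrt (2 * Real.pi * v))⁻¹ * Real.exp (-((2 * (v:ℝ))⁻¹) * x ^ 2) := by
  rw [gaussianPDFReal_def]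
  simp only [sub_zero]
  congr 1
  ring

lemma gauss_integral_eq (hv : v ≠ 0) (f : ℝ → ℝ) :
    ∫ x, f x ∂(gaussianReal 0 v) = ∫ x, gaussianPDFReal 0 v x * f x := by
  rw [gaussianReal_of_var_ne_zero _ hv]
  have h : (gaussianPDF 0 v) = fun x => ((gaussianPDFReal 0 v x).toNNReal : ENNReal) := by
    ext x; rw [gaussianPDF_def]; rfl
  rw [h, integral_withDensity_eq_integral_smul ((measurable_gaussianPDFReal 0 v).real_toNNReal)]
  congr 1; ext x
  simp [NNReal.smul_def, Real.coe_toNNReal _ (gaussianPDFReal_nonneg 0 v x)]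

lemma gauss_integrable_iff (hv : v ≠ 0) {f : ℝ → ℝ} :
    Integrable f (gaussianReal 0 v) ↔ Integrable (fun x => gaussianPDFReal 0 v x * f x) := by
  rw [gaussianReal_of_var_ne_zero _ hv]
  have h : (gaussianPDF 0 v) = fun x => ((gaussianPDFReal 0 v x).toNNReal : ENNReal) := by
    ext x; rw [gaussianPDF_def]; rfl
  rw [h, integrable_withDensity_iff_integrable_smul ((measurable_gaussianPDFReal 0 v).real_toNNReal)]
  constructor <;> intro h' <;>
  · apply h'.congr
    filter_upwards with x
    simp [NNReal.smul_def, Real.coe_toNNReal _ (gaussianPDFReal_nonneg 0 v x)]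

lemma sqrt_id (hv : v ≠ 0) : Real.sqrt (2*(v:ℝ)/Real.pi) = 2*(v:ℝ) / Real.sqrt (2*Real.pi*(v:ℝ)) := by
  have hvpos : (0:ℝ) < v := NNReal.coe_pos.mpr (pos_iff_ne_zero.mpr hv)
  have hne : Real.sqrt (2*Real.pi*(v:ℝ)) ≠ 0 :=
    ne_of_gt (Real.sqrt_pos.mpr (by positivity))
  have h1 : (2*(v:ℝ)/Real.pi) * (2*Real.pi*v) = (2*(v:ℝ))^2 := by
    field_simp
  rw [eq_div_iff hne, ← Real.sqrt_mul (by positivity), h1, Real.sqrt_sq (by positivity)]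

end aux

section aux2
variable {v : NNReal}

lemma gauss_abs_mean (hv : v ≠ 0) :
    ∫ x, |x| ∂(gaussianReal 0 v) = Real.sqrt (2*(v:ℝ)/Real.pi) := by
  have hvpos : (0:ℝ) < v := NNReal.coe_pos.mpr (pos_iff_ne_zero.mpr hv)
  have hb : (0:ℝ) < (2*(v:ℝ))⁻¹ := by positivity
  rw [gauss_integral_eq hv]
  have h : (fun x => gaussianPDFReal 0 v x * |x|)
      = fun x => (Real.sqrt (2 * Real.pi * v))⁻¹ * (|x| * Real.exp (-((2 * (v:ℝ))⁻¹) * |x| ^ 2)) := by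
    ext x
    rw [gauss_pdf_eq, sq_abs]
    ring
  rw [h, integral_const_mul,
    integral_comp_abs (f := fun y => y * Real.exp (-((2 * (v:ℝ))⁻¹) * y ^ 2)),
    integral_Ioi_mul_exp hb, sqrt_id hv]
  rw [show (2 * (2 * ((2:ℝ) * (v:ℝ))⁻¹)⁻¹) = 2 * (v:ℝ) by
    field_simp]
  rw [div_eq_inv_mul]

lemma gauss_exp_abs_integrable (hv : v ≠ 0) (t : ℝ) :
    Integrable (fun x => Real.exp (t * |x|)) (gaussianReal 0 v) := by
  have hvpos : (0:ℝ) < v := NNReal.coe_pos.mpr (pos_iff_ne_zero.mpr hv)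
  have hb : (0:ℝ) < (2*(v:ℝ))⁻¹ := by positivity
  rw [gauss_integrable_iff hv]
  set C := (Real.sqrt (2 * Real.pi * v))⁻¹ with hC
  have hCpos : 0 < C := by rw [hC]; positivity
  have h : (fun x => gaussianPDFReal 0 v x * Real.exp (t * |x|))
      = fun x => C * Real.exp (t * |x| - (2 * (v:ℝ))⁻¹ * x ^ 2) := by
    ext x
    rw [gauss_pdf_eq, mul_assoc, ← Real.exp_add]
    congr 2
    ring
  rw [h]
  apply Integrable.const_mul
  have hmaj : Integrable (fun x : ℝ =>
      Real.exp (t*x - (2*(v:ℝ))⁻¹*x^2) + Real.exp (-t*x - (2*(v:ℝ))⁻¹*x^2)) :=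
    (integrable_exp_lin_sq hb t).add (integrable_exp_lin_sq hb (-t))
  apply hmaj.mono' (Continuous.aestronglyMeasurable (by continuity))
  filter_upwards with x
  rw [Real.norm_eq_abs, abs_of_pos (Real.exp_pos _)]
  rcases abs_cases x with ⟨hax, _⟩ | ⟨hax, _⟩
  · calc Real.exp (t * |x| - (2*(v:ℝ))⁻¹ * x^2)
        = Real.exp (t*x - (2*(v:ℝ))⁻¹*x^2) := by rw [hax]
    _ ≤ _ := le_add_of_nonneg_right (Real.exp_pos _).le
  · calc Real.exp (t * |x| - (2*(v:ℝ))⁻¹ * x^2)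
        = Real.exp (-t*x - (2*(v:ℝ))⁻¹*x^2) := by rw [hax]; ring_nf
    _ ≤ _ := le_add_of_nonneg_left (Real.exp_pos _).le

end aux2

section aux3
variable {v : NNReal}

lemma gauss_mgf_bound (hv : v ≠ 0) {t : ℝ} (ht : 0 ≤ t) :
    ∫ x, Real.exp (t * |x|) ∂(gaussianReal 0 v)
      ≤ Real.exp (t * Real.sqrt (2*(v:ℝ)/Real.pi) + t^2 * (v:ℝ) / 2) := by
  have hvpos : (0:ℝ) < v := NNReal.coe_pos.mpr (pos_iff_ne_zero.mpr hv)
  have hb : (0:ℝ) < (2*(v:ℝ))⁻¹ := by positivity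
  set m := Real.sqrt (2*(v:ℝ)/Real.pi) with hm
  rw [gauss_integral_eq hv]
  set C := (Real.sqrt (2 * Real.pi * (v:ℝ)))⁻¹ with hC
  have hCpos : 0 < C := by rw [hC]; positivity
  have h : (fun x => gaussianPDFReal 0 v x * Real.exp (t * |x|))
      = fun x => C * (Real.exp (t * |x| - (2 * (v:ℝ))⁻¹ * |x| ^ 2)) := by
    ext x
    rw [gauss_pdf_eq, sq_abs, mul_assoc, ← Real.exp_add, hC]
    congr 2
    ring
  rw [h, integral_const_mul,
    integral_comp_abs (f := fun y => Real.exp (t * y - (2 * (v:ℝ))⁻¹ * y ^ 2))]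
  have hbound := Ioi_exp_bound hb ht
  calc C * (2 * ∫ x in Ioi (0:ℝ), Real.exp (t * x - (2 * (v:ℝ))⁻¹ * x ^ 2))
      ≤ C * (2 * (Real.exp (t^2/(4*(2*(v:ℝ))⁻¹)) * (t/(2*(2*(v:ℝ))⁻¹)
          + Real.sqrt (Real.pi/(2*(v:ℝ))⁻¹)/2))) := by gcongr
    _ = Real.exp (t^2 * (v:ℝ)/2) * (t * m + 1) := by
        rw [show t^2/(4*(2*(v:ℝ))⁻¹) = t^2*(v:ℝ)/2 by field_simp; ring]
        rw [show t/(2*(2*(v:ℝ))⁻¹) = t*(v:ℝ) by field_simp]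
        rw [show Real.pi/(2*(v:ℝ))⁻¹ = 2*Real.pi*(v:ℝ) by field_simp]
        rw [hm, sqrt_id hv, hC]
        have hs : Real.sqrt (2*Real.pi*(v:ℝ)) ≠ 0 := ne_of_gt (Real.sqrt_pos.mpr (by positivity))
        field_simp
    _ ≤ Real.exp (t^2 * (v:ℝ)/2) * Real.exp (t * m) := by
        apply mul_le_mul_of_nonneg_left _ (Real.exp_pos _).le
        have := Real.add_one_le_exp (t*m)
        linarith
    _ = Real.exp (t * m + t^2*(v:ℝ)/2) := by rw [← Real.exp_add]; ring_nf

end aux3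

section pi
variable {N : ℕ} (ν : Measure ℝ) [IsProbabilityMeasure ν]

lemma pi_integrable_prod {f : ℝ → ℝ} (hf : Integrable f ν) :
    Integrable (fun x : Fin N → ℝ => ∏ i, f (x i)) (Measure.pi fun _ : Fin N => ν) := by
  letI : MeasureSpace ℝ := ⟨ν⟩
  haveI : SigmaFinite (volume : Measure ℝ) := inferInstanceAs (SigmaFinite ν)
  exact Integrable.fintype_prod (f := fun _ : Fin N => f) (fun i => hf)

lemma pi_integral_prod (f : ℝ → ℝ) :
    ∫ x, (∏ i, f (x i)) ∂(Measure.pi fun _ : Fin N => ν) = (∫ y, f y ∂ν) ^ N := by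
  letI : MeasureSpace ℝ := ⟨ν⟩
  haveI : SigmaFinite (volume : Measure ℝ) := inferInstanceAs (SigmaFinite ν)
  have := integral_fintype_prod_eq_pow (ι := Fin N) f (μ := ν)
  rw [Fintype.card_fin] at this
  exact this

lemma pi_integrable_coord {f : ℝ → ℝ} (hf : Integrable f ν) (i : Fin N) :
    Integrable (fun x : Fin N → ℝ => f (x i)) (Measure.pi fun _ : Fin N => ν) := by
  letI : MeasureSpace ℝ := ⟨ν⟩
  haveI : SigmaFinite (volume : Measure ℝ) := inferInstanceAs (SigmaFinite ν)
  have h : (fun x : Fin N → ℝ => f (x i))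
      = fun x : Fin N → ℝ => ∏ j, (fun j y => if j = i then f y else (1:ℝ)) j (x j) := by
    ext x
    rw [Finset.prod_ite_eq' Finset.univ i (fun j => f (x j))]
    simp
  rw [h]
  have hint : ∀ j : Fin N, Integrable ((fun j y => if j = i then f y else (1:ℝ)) j) ν := by
    intro j
    by_cases hj : j = i <;> simp [hj]
    exact hf
  exact Integrable.fintype_prod (f := fun j y => if j = i then f y else (1:ℝ)) hint

lemma pi_integral_coord (f : ℝ → ℝ) (i : Fin N) :
    ∫ x, f (x i) ∂(Measure.pi fun _ : Fin N => ν) = ∫ y, f y ∂ν := by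
  letI : MeasureSpace ℝ := ⟨ν⟩
  haveI : SigmaFinite (volume : Measure ℝ) := inferInstanceAs (SigmaFinite ν)
  have h : (fun x : Fin N → ℝ => f (x i))
      = fun x : Fin N → ℝ => ∏ j, (fun j y => if j = i then f y else (1:ℝ)) j (x j) := by
    ext x
    rw [Finset.prod_ite_eq' Finset.univ i (fun j => f (x j))]
    simp
  calc ∫ x, f (x i) ∂(Measure.pi fun _ : Fin N => ν)
      = ∫ x : Fin N → ℝ, ∏ j, (fun j y => if j = i then f y else (1:ℝ)) j (x j) := by rw [← h]; rfl
    _ = ∏ j, ∫ y, (if j = i then f y else (1:ℝ)) ∂ν :=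
        integral_fintype_prod_eq_prod (ι := Fin N) (fun j y => if j = i then f y else (1:ℝ))
    _ = ∏ j, (if j = i then ∫ y, f y ∂ν else 1) := by
        apply Finset.prod_congr rfl
        intro j _
        by_cases hj : j = i <;> simp [hj]
    _ = ∫ y, f y ∂ν := by
        rw [Finset.prod_ite_eq' Finset.univ i (fun _ => ∫ y, f y ∂ν)]
        simp

end pi

lemma pi_dirac_zero {N : ℕ} :
    (Measure.pi fun _ : Fin N => Measure.dirac (0:ℝ)) = Measure.dirac (0 : Fin N → ℝ) := by
  refine Measure.pi_eq fun s hs => ?_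
  rw [Measure.dirac_apply' _ (MeasurableSet.univ_pi hs)]
  by_cases h : ∀ i, (0:ℝ) ∈ s i
  · rw [Set.indicator_of_mem (by simpa [Set.mem_univ_pi] using h)]
    have h1 : ∀ i : Fin N, Measure.dirac (0:ℝ) (s i) = 1 := fun i => by
      rw [Measure.dirac_apply' _ (hs i), Set.indicator_of_mem (h i)]; rfl
    simp [h1]
  · push_neg at h
    obtain ⟨i, hi⟩ := h
    rw [Set.indicator_of_notMem (by simp [Set.mem_univ_pi]; exact ⟨i, hi⟩)]
    have h1 : Measure.dirac (0:ℝ) (s i) = 0 := by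
      rw [Measure.dirac_apply' _ (hs i), Set.indicator_of_notMem hi]
    symm
    exact Finset.prod_eq_zero (Finset.mem_univ i) h1

/-- Let `X_1, …, X_N` be i.i.d. centred Gaussians with variance `σ²` and
`X = ∑ |X_i|`. Then for every `δ ≥ 0`,
`Pr[X > (1+δ)·E[X]] ≤ exp(−N·δ²/π)`. -/
theorem half_normal_sum_tail (N : ℕ) (hN : 0 < N) (σ : NNReal) (δ : ℝ) (hδ : 0 ≤ δ) :
    (Measure.pi fun _ : Fin N => gaussianReal 0 (σ ^ 2)) {x |
        (1 + δ) *
            (∫ y, (∑ i, |y i|) ∂(Measure.pi fun _ : Fin N => gaussianReal 0 (σ ^ 2))) <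
          ∑ i, |x i|} ≤
      ENNReal.ofReal (Real.exp (-((N : ℝ) * δ ^ 2 / Real.pi))) := by
  have hXmeas : Measurable (fun x : Fin N → ℝ => ∑ i, |x i|) :=
    Finset.measurable_sum _ (fun i _ => (measurable_pi_apply i).abs)
  by_cases hσ : σ = 0
  · subst hσ
    have h0 : gaussianReal 0 ((0:NNReal) ^ 2) = Measure.dirac 0 := by
      rw [show ((0:NNReal)^2) = 0 by norm_num, gaussianReal_zero_var]
    simp only [h0, pi_dirac_zero]
    have hE : ∫ y : Fin N → ℝ, (∑ i, |y i|) ∂(Measure.dirac 0)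
        = ∑ i : Fin N, |(0 : Fin N → ℝ) i| := integral_dirac' _ _ hXmeas.stronglyMeasurable
    rw [hE]
    simp only [Pi.zero_apply, abs_zero, Finset.sum_const, smul_zero, mul_zero]
    rw [Measure.dirac_apply' _ (measurableSet_lt measurable_const hXmeas)]
    rw [Set.indicator_of_notMem (by simp)]
    exact zero_le
  · set v : NNReal := σ ^ 2 with hvdef
    have hv : v ≠ 0 := pow_ne_zero _ hσ
    have hvpos : (0:ℝ) < v := NNReal.coe_pos.mpr (pos_iff_ne_zero.mpr hv)
    set μ1 := gaussianReal 0 v with hμ1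
    set μ := Measure.pi fun _ : Fin N => μ1 with hμ
    set m := Real.sqrt (2*(v:ℝ)/Real.pi) with hmdef
    have hmpos : 0 < m := Real.sqrt_pos.mpr (by positivity)
    have hm2 : m^2 = 2*(v:ℝ)/Real.pi := Real.sq_sqrt (by positivity)
    have habs_int : Integrable (fun x => |x|) μ1 := by
      apply (gauss_exp_abs_integrable hv 1).mono'
        (measurable_abs.aestronglyMeasurable)
      filter_upwards with x
      rw [Real.norm_eq_abs, abs_abs, one_mul]
      have := Real.add_one_le_exp |x|
      linarith
    have hE : ∫ y, (∑ i, |y i|) ∂μ = N * m := by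
      rw [integral_finset_sum _ (fun i _ => pi_integrable_coord μ1 habs_int i)]
      have hco : ∀ i : Fin N, ∫ x, |x i| ∂μ = m := by
        intro i
        rw [pi_integral_coord μ1 (fun y => |y|) i, gauss_abs_mean hv]
      rw [Finset.sum_congr rfl (fun i _ => hco i)]
      simp [mul_comm]
    set t := δ * m / (v:ℝ) with htdef
    have ht : 0 ≤ t := by positivity
    have hmgf1 : Integrable (fun x => Real.exp (t * |x|)) μ1 := gauss_exp_abs_integrable hv t
    have hprodrw : (fun x : Fin N → ℝ => Real.exp (t * ∑ i, |x i|))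
        = fun x => ∏ i, Real.exp (t * |x i|) := by
      ext x
      rw [Finset.mul_sum, Real.exp_sum]
    have hint : Integrable (fun x : Fin N → ℝ => Real.exp (t * ∑ i, |x i|)) μ := by
      rw [hprodrw]; exact pi_integrable_prod μ1 hmgf1
    have chern := measure_ge_le_exp_mul_mgf (μ := μ) (X := fun x => ∑ i, |x i|)
      ((1+δ)*((N:ℝ)*m)) ht hint
    have hmgf : mgf (fun x : Fin N → ℝ => ∑ i, |x i|) μ t
        = (∫ x, Real.exp (t * |x|) ∂μ1) ^ N := by
      simp only [mgf]
      rw [hprodrw]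
      exact pi_integral_prod μ1 (fun y => Real.exp (t * |y|))
    have hb2 : (∫ x, Real.exp (t * |x|) ∂μ1) ^ N ≤ Real.exp ((N:ℝ) * (t*m + t^2*(v:ℝ)/2)) := by
      rw [Real.exp_nat_mul]
      exact pow_le_pow_left₀ (integral_nonneg (fun x => (Real.exp_pos _).le))
        (gauss_mgf_bound hv ht) N
    have harith : -t * ((1+δ)*((N:ℝ)*m)) + (N:ℝ) * (t*m + t^2*(v:ℝ)/2) = -((N:ℝ)*δ^2/Real.pi) := by
      have hπ : Real.pi ≠ 0 := Real.pi_ne_zero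
      have key : -t * ((1+δ)*((N:ℝ)*m)) + (N:ℝ)*(t*m + t^2*(v:ℝ)/2)
          = -((N:ℝ)*δ^2*m^2/(2*(v:ℝ))) := by
        rw [htdef]
        field_simp
        ring
      rw [key, hm2]
      field_simp
    have hfin : (μ {x | (1+δ)*((N:ℝ)*m) ≤ ∑ i, |x i|}).toReal
        ≤ Real.exp (-((N:ℝ)*δ^2/Real.pi)) := by
      calc (μ {x | (1+δ)*((N:ℝ)*m) ≤ ∑ i, |x i|}).toReal
          ≤ Real.exp (-t * ((1+δ)*((N:ℝ)*m))) * mgf (fun x : Fin N → ℝ => ∑ i, |x i|) μ t :=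
            chern
        _ ≤ Real.exp (-t * ((1+δ)*((N:ℝ)*m))) * Real.exp ((N:ℝ) * (t*m + t^2*(v:ℝ)/2)) := by
            rw [hmgf]
            exact mul_le_mul_of_nonneg_left hb2 (Real.exp_pos _).le
        _ = Real.exp (-((N:ℝ)*δ^2/Real.pi)) := by rw [← Real.exp_add, harith]
    rw [hE]
    calc μ {x | (1+δ)*((N:ℝ)*m) < ∑ i, |x i|}
        ≤ μ {x | (1+δ)*((N:ℝ)*m) ≤ ∑ i, |x i|} :=
          measure_mono (Set.setOf_subset_setOf.mpr (fun x hx => le_of_lt hx))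
      _ = ENNReal.ofReal ((μ {x | (1+δ)*((N:ℝ)*m) ≤ ∑ i, |x i|}).toReal) :=
          (ENNReal.ofReal_toReal (measure_ne_top _ _)).symm
      _ ≤ ENNReal.ofReal (Real.exp (-((N:ℝ)*δ^2/Real.pi))) := ENNReal.ofReal_le_ofReal hfin
end
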